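/- For any two unit vectors |ψ⟩, |φ⟩ in a finite-dimensional complex Hilbert space and any unit vector |χ⟩, the inequality |⟨ψ|φ⟩| ≤ |⟨ψ|χ⟩|·|⟨χ|φ⟩| + √(1−|⟨ψ|χ⟩|²)·√(1−|⟨χ|φ⟩|²) holds. -/

import Mathlib

open scoped InnerProductSpace

theorem stmt_13 {E : Type*} [NormedAddCommGroup E] [InnerProductSpace ℂ E]
    [FiniteDimensional ℂ E]
    (ψ φ χ : E) (hψ : ‖ψ‖ = 1) (hφ : ‖φ‖ = 1) (hχ : ‖χ‖ = 1) :
    ‖⟪ψ, φ⟫_ℂ‖ ≤ ‖⟪ψ, χ⟫_ℂ‖ * ‖⟪χ, φ⟫_ℂ‖ +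
      Real.sqrt (1 - ‖⟪ψ, χ⟫_ℂ‖ ^ 2) * Real.sqrt (1 - ‖⟪χ, φ⟫_ℂ‖ ^ 2) := by
  set a := ⟪χ, ψ⟫_ℂ with ha
  set b := ⟪χ, φ⟫_ℂ with hb
  set ψ' := ψ - a • χ with hψ'
  set φ' := φ - b • χ with hφ'
  have hχχ : ⟪χ, χ⟫_ℂ = 1 := by
    rw [@inner_self_eq_norm_sq_to_K ℂ, hχ]; norm_num
  have hψψ : ⟪ψ, ψ⟫_ℂ = 1 := by
    rw [@inner_self_eq_norm_sq_to_K ℂ, hψ]; norm_num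
  have hφφ : ⟪φ, φ⟫_ℂ = 1 := by
    rw [@inner_self_eq_norm_sq_to_K ℂ, hφ]; norm_num
  have hψχ : ⟪ψ, χ⟫_ℂ = starRingEnd ℂ a := by rw [ha, inner_conj_symm]
  have hφχ : ⟪φ, χ⟫_ℂ = starRingEnd ℂ b := by rw [hb, inner_conj_symm]
  have key : ⟪ψ, φ⟫_ℂ = starRingEnd ℂ a * b + ⟪ψ', φ'⟫_ℂ := by
    rw [hψ', hφ']
    simp only [inner_sub_left, inner_sub_right, inner_smul_left, inner_smul_right,
      hχχ, hψχ, hb]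
    ring
  have hna : ‖a‖ ≤ 1 := by
    calc ‖a‖ ≤ ‖χ‖ * ‖ψ‖ := norm_inner_le_norm χ ψ
    _ = 1 := by rw [hχ, hψ]; ring
  have hnb : ‖b‖ ≤ 1 := by
    calc ‖b‖ ≤ ‖χ‖ * ‖φ‖ := norm_inner_le_norm χ φ
    _ = 1 := by rw [hχ, hφ]; ring
  have hψ'n : ‖ψ'‖ ^ 2 = 1 - ‖a‖ ^ 2 := by
    have h1 : ⟪ψ', ψ'⟫_ℂ = 1 - (‖a‖ : ℂ) ^ 2 := by
      rw [hψ']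
      simp only [inner_sub_left, inner_sub_right, inner_smul_left, inner_smul_right,
        hχχ, hψχ, hψψ]
      rw [mul_comm (starRingEnd ℂ a) a, Complex.mul_conj']
      simp [Complex.normSq_eq_norm_sq]
    have h2 : ((‖ψ'‖ : ℂ)) ^ 2 = 1 - (‖a‖ : ℂ) ^ 2 := by
      rw [← h1]; exact (inner_self_eq_norm_sq_to_K (𝕜 := ℂ) ψ').symm
    exact_mod_cast h2
  have hφ'n : ‖φ'‖ ^ 2 = 1 - ‖b‖ ^ 2 := by
    have h1 : ⟪φ', φ'⟫_ℂ = 1 - (‖b‖ : ℂ) ^ 2 := by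
      rw [hφ']
      simp only [inner_sub_left, inner_sub_right, inner_smul_left, inner_smul_right,
        hχχ, hφχ, hφφ, hb]
      rw [mul_comm (starRingEnd ℂ b) b, Complex.mul_conj']
      simp [Complex.normSq_eq_norm_sq]
      rfl
    have h2 : ((‖φ'‖ : ℂ)) ^ 2 = 1 - (‖b‖ : ℂ) ^ 2 := by
      rw [← h1]; exact (inner_self_eq_norm_sq_to_K (𝕜 := ℂ) φ').symm
    exact_mod_cast h2
  have hψ'e : ‖ψ'‖ = Real.sqrt (1 - ‖a‖ ^ 2) := by
    rw [← hψ'n, Real.sqrt_sq (norm_nonneg _)]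
  have hφ'e : ‖φ'‖ = Real.sqrt (1 - ‖b‖ ^ 2) := by
    rw [← hφ'n, Real.sqrt_sq (norm_nonneg _)]
  have hsym1 : ‖⟪ψ, χ⟫_ℂ‖ = ‖a‖ := by rw [hψχ]; simp
  have hsym2 : ‖⟪χ, φ⟫_ℂ‖ = ‖b‖ := rfl
  rw [hsym1, hsym2, key]
  calc ‖starRingEnd ℂ a * b + ⟪ψ', φ'⟫_ℂ‖
      ≤ ‖starRingEnd ℂ a * b‖ + ‖⟪ψ', φ'⟫_ℂ‖ := norm_add_le _ _
    _ ≤ ‖a‖ * ‖b‖ + ‖ψ'‖ * ‖φ'‖ := by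
        gcongr
        · simp [norm_mul]
        · exact norm_inner_le_norm ψ' φ'
    _ = ‖a‖ * ‖b‖ + Real.sqrt (1 - ‖a‖ ^ 2) * Real.sqrt (1 - ‖b‖ ^ 2) := by
        rw [hψ'e, hφ'e]
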